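/- Let n ≥ 1 be an integer, P ≥ 1 and C > 0 and ε > 0 real numbers, and set L = εC/(n(P+1)). Let S be a finite index set with |S| ≤ n and let d_k ∈ ℂ for k ∈ S satisfy Im(d_k) ≥ 0 for all k, and −Re(d_k) ≤ P·Im(d_k) whenever Re(d_k) < 0. If |∑_{k∈S} d_k| ≤ C, then the rounded demands satisfy (∑_{k∈S} Re(ĥd_k))² + (∑_{k∈S} Im(ĥd_k))² ≤ (1 + 2ε)²·C², i.e., |∑_{k∈S} ĥd_k| ≤ (1 + 2ε)·C. -/

import Mathlib

/-- The rounded demand: real part rounded up (resp. down) to a multiple of `L`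
when it is nonnegative (resp. negative), imaginary part always rounded up. -/
noncomputable def roundDemand (L : ℝ) (d : ℂ) : ℂ :=
  if 0 ≤ d.re then
    ⟨(⌈d.re / L⌉ : ℤ) * L, (⌈d.im / L⌉ : ℤ) * L⟩
  else
    ⟨(⌊d.re / L⌋ : ℤ) * L, (⌈d.im / L⌉ : ℤ) * L⟩

lemma ceil_mul_close {L : ℝ} (hLpos : 0 < L) (x : ℝ) :
    |(⌈x / L⌉ : ℝ) * L - x| ≤ L := by
  have h1 : x ≤ (⌈x / L⌉ : ℝ) * L := (div_le_iff₀ hLpos).mp (Int.le_ceil _)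
  have h2 : (⌈x / L⌉ : ℝ) * L ≤ x + L := by
    have := mul_lt_mul_of_pos_right (Int.ceil_lt_add_one (x / L)) hLpos
    rw [add_mul, one_mul, div_mul_cancel₀ _ hLpos.ne'] at this
    linarith
  rw [abs_le]; constructor <;> linarith

lemma floor_mul_close {L : ℝ} (hLpos : 0 < L) (x : ℝ) :
    |(⌊x / L⌋ : ℝ) * L - x| ≤ L := by
  have h1 : (⌊x / L⌋ : ℝ) * L ≤ x := (le_div_iff₀ hLpos).mp (Int.floor_le _)
  have h2 : x - L ≤ (⌊x / L⌋ : ℝ) * L := by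
    have := mul_lt_mul_of_pos_right (Int.sub_one_lt_floor (x / L)) hLpos
    rw [sub_mul, one_mul, div_mul_cancel₀ _ hLpos.ne'] at this
    linarith
  rw [abs_le]; constructor <;> linarith

lemma roundDemand_close (L : ℝ) (hLpos : 0 < L) (z : ℂ) :
    ‖(roundDemand L z - z)‖ ≤ 2 * L := by
  have hre : |(roundDemand L z).re - z.re| ≤ L := by
    unfold roundDemand
    split_ifs with h
    · exact ceil_mul_close hLpos _
    · exact floor_mul_close hLpos _
  have him : |(roundDemand L z).im - z.im| ≤ L := by
    have h0 : (roundDemand L z).im = (⌈z.im / L⌉ : ℤ) * L := by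
      unfold roundDemand; split_ifs <;> rfl
    rw [h0]; exact ceil_mul_close hLpos _
  calc ‖(roundDemand L z - z)‖
      ≤ |(roundDemand L z - z).re| + |(roundDemand L z - z).im| :=
        Complex.norm_le_abs_re_add_abs_im _
    _ ≤ 2 * L := by
        simp only [Complex.sub_re, Complex.sub_im]
        linarith

/-- any feasible set of demands remains feasible after rounding,
with the capacity inflated by a factor `1 + 2ε`. -/
theorem stmt_3 {ι : Type*} (n : ℕ) (hn : 1 ≤ n) (P C ε L : ℝ)
    (hP : 1 ≤ P) (hC : 0 < C) (hε : 0 < ε)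
    (hL : L = ε * C / (n * (P + 1)))
    (S : Finset ι) (hS : S.card ≤ n) (d : ι → ℂ)
    (hIm : ∀ k ∈ S, 0 ≤ (d k).im)
    (hArg : ∀ k ∈ S, (d k).re < 0 → -(d k).re ≤ P * (d k).im)
    (hCap : ‖(∑ k ∈ S, d k)‖ ≤ C) :
    (∑ k ∈ S, (roundDemand L (d k)).re) ^ 2 + (∑ k ∈ S, (roundDemand L (d k)).im) ^ 2
        ≤ (1 + 2 * ε) ^ 2 * C ^ 2 ∧
    ‖(∑ k ∈ S, roundDemand L (d k))‖ ≤ (1 + 2 * ε) * C := by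
  have hnpos : (0:ℝ) < n := by exact_mod_cast hn
  have hLpos : 0 < L := by
    rw [hL]
    positivity
  have habs : ‖(∑ k ∈ S, roundDemand L (d k))‖ ≤ (1 + 2 * ε) * C := by
    have hsplit : (∑ k ∈ S, roundDemand L (d k))
        = (∑ k ∈ S, d k) + ∑ k ∈ S, (roundDemand L (d k) - d k) := by
      rw [Finset.sum_sub_distrib]; ring
    have herr : ‖(∑ k ∈ S, (roundDemand L (d k) - d k))‖ ≤ n * (2 * L) := by
      calc ‖(∑ k ∈ S, (roundDemand L (d k) - d k))‖
          ≤ ∑ k ∈ S, ‖(roundDemand L (d k) - d k)‖ := norm_sum_le _ _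
        _ ≤ ∑ _k ∈ S, (2 * L) := Finset.sum_le_sum fun k _ => roundDemand_close L hLpos _
        _ = S.card * (2 * L) := by rw [Finset.sum_const, nsmul_eq_mul]
        _ ≤ n * (2 * L) := by
            have : (S.card : ℝ) ≤ n := by exact_mod_cast hS
            nlinarith
    have hnL : (n:ℝ) * (2 * L) ≤ 2 * ε * C := by
      have hkey : (n:ℝ) * (2 * L) = 2 * ε * C / (P + 1) := by
        rw [hL]; field_simp
      rw [hkey, div_le_iff₀ (by linarith : (0:ℝ) < P + 1)]
      nlinarith [mul_pos hε hC]
    calc ‖(∑ k ∈ S, roundDemand L (d k))‖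
        ≤ ‖(∑ k ∈ S, d k)‖
          + ‖(∑ k ∈ S, (roundDemand L (d k) - d k))‖ := by
          rw [hsplit]; exact norm_add_le _ _
      _ ≤ C + 2 * ε * C := by linarith
      _ = (1 + 2 * ε) * C := by ring
  refine ⟨?_, habs⟩
  have hsq : ‖(∑ k ∈ S, roundDemand L (d k))‖ ^ 2 ≤ ((1 + 2 * ε) * C) ^ 2 :=
    pow_le_pow_left₀ (norm_nonneg _) habs 2
  rw [Complex.sq_norm, Complex.normSq_apply, Complex.re_sum, Complex.im_sum] at hsq
  calc (∑ k ∈ S, (roundDemand L (d k)).re) ^ 2 + (∑ k ∈ S, (roundDemand L (d k)).im) ^ 2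
      = (∑ k ∈ S, (roundDemand L (d k)).re) * (∑ k ∈ S, (roundDemand L (d k)).re)
        + (∑ k ∈ S, (roundDemand L (d k)).im) * (∑ k ∈ S, (roundDemand L (d k)).im) := by ring
    _ ≤ ((1 + 2 * ε) * C) ^ 2 := hsq
    _ = (1 + 2 * ε) ^ 2 * C ^ 2 := by ring
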